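/- Let 0 ≤ d₁, d₂ ≤ 2(q²−1). The evaluations over F_{q²}² of the monomials in U_{d₁,d₂} form a basis of RM_{d₁}(q²,2) ∩ RM_{d₂}^{⊥h}(q²,2). -/

import Mathlib

open MvPolynomial

/-- Evaluation of bivariate polynomials at all points of the affine plane. -/
noncomputable def evA (F : Type*) [Field F] :
    MvPolynomial (Fin 2) F →ₗ[F] ((Fin 2 → F) → F) :=
  LinearMap.pi fun Q => (aeval Q).toLinearMap

/-- The affine Reed–Muller code of degree `e` in two variables. -/
noncomputable def RM (F : Type*) [Field F] (e : ℕ) : Submodule F ((Fin 2 → F) → F) :=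
  (restrictTotalDegree (Fin 2) F e).map (evA F)

/-- The Hermitian dual of a code over `F_{q²}` (defined using `x ↦ x^q`). -/
noncomputable def hermDualA {F : Type*} [Field F] [Fintype F] (q : ℕ)
    (Ccode : Submodule F ((Fin 2 → F) → F)) : Submodule F ((Fin 2 → F) → F) where
  carrier := {v | ∀ w ∈ Ccode, ∑ i, v i * (w i) ^ q = 0}
  add_mem' := by
    intro a b ha hb w hw
    simp only [Set.mem_setOf_eq] at ha hb ⊢
    simp [Pi.add_apply, add_mul, Finset.sum_add_distrib, ha w hw, hb w hw]
  zero_mem' := by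
    intro w hw
    simp
  smul_mem' := by
    intro c a ha w hw
    simp only [Set.mem_setOf_eq] at ha ⊢
    simp [Pi.smul_apply, smul_eq_mul, mul_assoc, ← Finset.mul_sum, ha w hw]

/-- `ob N z` is the representative `z̄` of `z` modulo `N−1`: it satisfies
`1 ≤ z̄ ≤ N−1` and `z̄ ≡ z (mod N−1)` if `z > 0`, and `z̄ = 0` if `z = 0`. -/
def ob (N z : ℕ) : ℕ := if z = 0 then 0 else (z - 1) % (N - 1) + 1

/-- The set of monomials `U_{d₁,d₂}` (in the variables `x₁ = X 0`, `x₂ = X 1`). -/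
def Uset (F : Type*) [Field F] (q d₁ d₂ : ℕ) : Set (MvPolynomial (Fin 2) F) :=
  {M | ∃ a₁ a₂ : ℕ, a₁ ≤ q ^ 2 - 1 ∧ a₂ ≤ q ^ 2 - 1 ∧ a₁ + a₂ ≤ d₁ ∧
    (ob (q ^ 2) (q * a₁) : ℤ) + (ob (q ^ 2) (q * a₂) : ℤ) ≤
      2 * ((q : ℤ) ^ 2 - 1) - d₂ - 1 ∧
    M = X 0 ^ a₁ * X 1 ^ a₂}


namespace Stmt10Aux
open Finset



lemma ob_zero (N : ℕ) : ob N 0 = 0 := if_pos rfl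

lemma ob_eq_zero_iff (N z : ℕ) : ob N z = 0 ↔ z = 0 := by
  unfold ob; split <;> simp_all

lemma ob_le_sub_one {N : ℕ} (hN : 2 ≤ N) (z : ℕ) : ob N z ≤ N - 1 := by
  unfold ob; split
  · omega
  · have := Nat.mod_lt (z - 1) (show 0 < N - 1 by omega)
    omega

lemma ob_le_self (N z : ℕ) : ob N z ≤ z := by
  unfold ob; split
  · omega
  · have := Nat.mod_le (z - 1) (N - 1)
    omega

lemma ob_modeq (N z : ℕ) : ob N z ≡ z [MOD N - 1] := by
  unfold ob; split
  · subst ‹z = 0›; rfl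
  · have h1 : (z - 1) % (N - 1) ≡ z - 1 [MOD N - 1] := Nat.mod_modEq _ _
    have h2 : (z - 1) % (N - 1) + 1 ≡ (z - 1) + 1 [MOD N - 1] := h1.add_right 1
    have : z - 1 + 1 = z := by omega
    rwa [this] at h2

lemma ob_of_dvd {N z : ℕ} (hN : 2 ≤ N) (hz : 0 < z) (h : (N - 1) ∣ z) : ob N z = N - 1 := by
  obtain ⟨k, rfl⟩ := h
  rcases k with _ | n
  · omega
  · have h : (N-1) * (n+1) = (N-1)*n + (N-1) := by ring
    have e1 : (N-1)*(n+1) - 1 = (N-2) + (N-1)*n := by omega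
    unfold ob
    rw [if_neg (by omega), e1, Nat.add_mul_mod_self_left, Nat.mod_eq_of_lt (by omega)]
    omega

lemma ob_dvd_sub {N : ℕ} (hN : 2 ≤ N) (z : ℕ) : ((N:ℤ) - 1) ∣ (z : ℤ) - ob N z := by
  have h := ((ob_modeq N z).dvd : ((N - 1 : ℕ):ℤ) ∣ (z:ℤ) - (ob N z : ℤ))
  have e : ((N - 1 : ℕ) : ℤ) = (N : ℤ) - 1 := by omega
  rwa [e] at h

/-- The exponent-reduction property of `ob`. -/
lemma pow_ob {F : Type*} [Field F] [Fintype F] {N : ℕ} (hN : Fintype.card F = N)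
    (t : F) (z : ℕ) : t ^ z = t ^ ob N z := by
  subst hN
  rcases eq_or_ne z 0 with rfl | hz
  · rw [ob_zero]
  · have hobz : ob (Fintype.card F) z ≠ 0 := fun h => hz ((ob_eq_zero_iff _ z).mp h)
    rcases eq_or_ne t 0 with rfl | ht
    · rw [zero_pow hz, zero_pow hobz]
    · have hle := ob_le_self (Fintype.card F) z
      have hdvd : (Fintype.card F - 1) ∣ z - ob (Fintype.card F) z :=
        (Nat.modEq_iff_dvd' hle).mp (ob_modeq (Fintype.card F) z)
      obtain ⟨k, hk⟩ := hdvd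
      have hz' : z = ob (Fintype.card F) z + (Fintype.card F - 1) * k := by omega
      conv_lhs => rw [hz']
      rw [pow_add, pow_mul, FiniteField.pow_card_sub_one_eq_one t ht, one_pow, mul_one]

/-- The character sum `∑ t^m` over a finite field. -/
lemma sum_pow_eq {F : Type*} [Field F] [Fintype F] {N : ℕ} (hN : Fintype.card F = N)
    (m : ℕ) :
    (∑ t : F, t ^ m) = if m ≠ 0 ∧ (N - 1) ∣ m then -1 else 0 := by
  classical
  rcases eq_or_ne m 0 with rfl | hm
  · simp only [pow_zero, sum_const, card_univ, nsmul_one, ne_eq, not_true_eq_false,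
      false_and, if_false]
    exact_mod_cast FiniteField.cast_card_eq_zero F
  · have key : (∑ t : F, t ^ m) = ∑ u : Fˣ, (u : F) ^ m := by
      let φ : Fˣ ↪ F := ⟨fun x ↦ x, fun _ _ h => Units.ext h⟩
      have h1 : univ.map φ = univ \ {0} := by
        ext x
        simp only [mem_map, mem_univ, Function.Embedding.coeFn_mk, true_and, mem_sdiff,
          mem_singleton, φ]
        exact isUnit_iff_ne_zero
      have h2 : ∑ t : F, t ^ m = ∑ x ∈ univ \ {(0:F)}, x ^ m := by
        rw [← sum_sdiff (subset_univ {(0:F)})]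
        simp [zero_pow hm]
      rw [h2, ← h1, univ.sum_map φ]
      rfl
    rw [key, FiniteField.sum_pow_units, hN]
    simp [hm]



noncomputable def ebn (F : Type*) [Field F] (b : Fin 2 → ℕ) : (Fin 2 → F) → F :=
  fun P => P 0 ^ b 0 * P 1 ^ b 1

noncomputable def mon (F : Type*) [Field F] (b : Fin 2 → ℕ) : MvPolynomial (Fin 2) F :=
  X 0 ^ b 0 * X 1 ^ b 1

lemma evA_mon (F : Type*) [Field F] (b : Fin 2 → ℕ) : evA F (mon F b) = ebn F b := by
  funext P
  simp [evA, mon, ebn]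

lemma mon_eq_monomial (F : Type*) [Field F] (b : Fin 2 → ℕ) :
    mon F b = monomial (Finsupp.single 0 (b 0) + Finsupp.single 1 (b 1)) (1 : F) := by
  rw [mon, X_pow_eq_monomial, X_pow_eq_monomial, monomial_mul, one_mul]

lemma pairing_eq {F : Type*} [Field F] [Fintype F] (q : ℕ) (a b : Fin 2 → ℕ) :
    (∑ P : Fin 2 → F, ebn F a P * (ebn F b P) ^ q) =
      (∑ t : F, t ^ (a 0 + q * b 0)) * (∑ t : F, t ^ (a 1 + q * b 1)) := by
  classical
  have h1 : ∀ P : Fin 2 → F, ebn F a P * (ebn F b P) ^ q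
      = ∏ i : Fin 2, P i ^ (a i + q * b i) := by
    intro P
    simp only [ebn, Fin.prod_univ_two, mul_pow, ← pow_mul, pow_add]
    ring
  simp only [h1]
  rw [← Fin.prod_univ_two (f := fun i => ∑ t : F, t ^ (a i + q * b i)),
    Finset.prod_univ_sum, Fintype.piFinset_univ]

lemma indep_aux (F : Type*) [Field F] [Fintype F] {N : ℕ} (hN : Fintype.card F = N) :
    LinearIndependent F (fun b : Fin 2 → Fin N => evA F (mon F (fun i => (b i : ℕ)))) := by
  classical
  subst hN
  set monfam : (Fin 2 → Fin (Fintype.card F)) → MvPolynomial (Fin 2) F :=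
    fun b => mon F (fun i => (b i : ℕ)) with hmonfam
  have hinj : Function.Injective
      (fun b : Fin 2 → Fin (Fintype.card F) =>
        Finsupp.single (0 : Fin 2) (b 0 : ℕ) + Finsupp.single 1 (b 1 : ℕ)) := by
    intro b b' h
    have h0 : ((b 0 : ℕ)) = (b' 0 : ℕ) := by
      have := DFunLike.congr_fun h (0 : Fin 2)
      simpa [Finsupp.single_apply] using this
    have h1 : ((b 1 : ℕ)) = (b' 1 : ℕ) := by
      have := DFunLike.congr_fun h (1 : Fin 2)
      simpa [Finsupp.single_apply] using this
    funext i
    fin_cases i <;> [exact Fin.ext h0; exact Fin.ext h1]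
  have hmon : LinearIndependent F monfam := by
    have h := ((basisMonomials (Fin 2) F).linearIndependent).comp _ hinj
    have e : monfam = fun b : Fin 2 → Fin (Fintype.card F) =>
        (basisMonomials (Fin 2) F) (Finsupp.single 0 (b 0 : ℕ) + Finsupp.single 1 (b 1 : ℕ)) := by
      funext b
      rw [coe_basisMonomials, hmonfam]
      exact mon_eq_monomial F _
    rw [e]
    exact h
  have hdisj : Disjoint (Submodule.span F (Set.range monfam)) (LinearMap.ker (evA F)) := by
    rw [Submodule.disjoint_def]
    intro p hp hker
    have hdeg : p ∈ restrictDegree (Fin 2) F (Fintype.card F - 1) := by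
      have hle : Submodule.span F (Set.range monfam)
          ≤ restrictDegree (Fin 2) F (Fintype.card F - 1) := by
        rw [Submodule.span_le]
        rintro _ ⟨b, rfl⟩
        rw [SetLike.mem_coe, mem_restrictDegree]
        intro s hs i
        have hs' : s ∈ (mon F (fun i => ((b i : ℕ)))).support := hs
        rw [mon_eq_monomial, support_monomial] at hs'
        simp only [if_neg (one_ne_zero : (1:F) ≠ 0)] at hs'
        rw [Finset.mem_singleton] at hs'
        subst hs'
        have hb0 : (b 0 : ℕ) ≤ Fintype.card F - 1 := Nat.le_sub_one_of_lt (b 0).isLt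
        have hb1 : (b 1 : ℕ) ≤ Fintype.card F - 1 := Nat.le_sub_one_of_lt (b 1).isLt
        fin_cases i <;> simp [Finsupp.single_apply, hb0, hb1]
      exact hle hp
    have heval : ∀ v : Fin 2 → F, eval v p = 0 := by
      intro v
      have h := congrFun (LinearMap.mem_ker.mp hker) v
      have h' : (aeval v) p = 0 := by simpa [evA] using h
      rw [← coe_aeval_eq_eval]
      exact h'
    -- transport to `ULift (Fin 2)` to match universes in `eq_zero_of_eval_eq_zero`
    let e : Fin 2 ≃ ULift.{u_1} (Fin 2) := Equiv.ulift.symm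
    have hren : MvPolynomial.rename (⇑e) p = 0 := by
      apply MvPolynomial.eq_zero_of_eval_eq_zero (ULift.{u_1} (Fin 2)) F
      · intro v
        rw [MvPolynomial.eval_rename]
        exact heval _
      · rw [mem_restrictDegree]
        intro s hs i
        rw [MvPolynomial.support_rename_of_injective e.injective, Finset.mem_image] at hs
        obtain ⟨s₀, hs₀, rfl⟩ := hs
        rw [← e.apply_symm_apply i, Finsupp.mapDomain_apply e.injective]
        exact (mem_restrictDegree _ _ _).mp hdeg s₀ hs₀ _
    exact (MvPolynomial.rename_injective (⇑e) e.injective)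
      (by rw [hren, map_zero])
  have := hmon.map hdisj
  exact this


lemma restrictTotalDegree_eq_span (F : Type*) [Field F] (e : ℕ) :
    restrictTotalDegree (Fin 2) F e
      = Submodule.span F (mon F '' {b : Fin 2 → ℕ | b 0 + b 1 ≤ e}) := by
  apply le_antisymm
  · intro p hp
    rw [← support_sum_monomial_coeff p]
    apply Submodule.sum_mem
    intro s hs
    have hdeg : s 0 + s 1 ≤ e := by
      have h1 := MvPolynomial.le_totalDegree (p := p) hs
      have h2 := (mem_restrictTotalDegree _ e p).mp hp
      have h3 : (s.sum fun _ n => n) = s 0 + s 1 := by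
        rw [Finsupp.sum_fintype _ _ (fun i => rfl), Fin.sum_univ_two]
      omega
    have hidx : Finsupp.single (0 : Fin 2) (s 0) + Finsupp.single 1 (s 1) = s := by
      ext i; fin_cases i <;> simp [Finsupp.single_apply]
    have hrw : monomial s (coeff s p) = (coeff s p) • mon F (fun i => s i) := by
      rw [mon_eq_monomial, smul_monomial, smul_eq_mul, mul_one]
      exact congrArg (fun t => monomial t (coeff s p)) hidx.symm
    rw [hrw]
    exact Submodule.smul_mem _ _ (Submodule.subset_span ⟨fun i => s i, hdeg, rfl⟩)
  · rw [Submodule.span_le]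
    rintro _ ⟨b, hb, rfl⟩
    rw [SetLike.mem_coe, mem_restrictTotalDegree, mon]
    refine le_trans (totalDegree_mul _ _) ?_
    rw [totalDegree_X_pow, totalDegree_X_pow]
    exact hb

lemma RM_eq_span (F : Type*) [Field F] [Fintype F] {N : ℕ} (hN : Fintype.card F = N)
    (hN2 : 2 ≤ N) (e : ℕ) :
    RM F e = Submodule.span F
      (ebn F '' {b : Fin 2 → ℕ | (b 0 ≤ N - 1 ∧ b 1 ≤ N - 1) ∧ b 0 + b 1 ≤ e}) := by
  rw [RM, restrictTotalDegree_eq_span, Submodule.map_span, ← Set.image_comp]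
  have himg : (⇑(evA F) ∘ mon F) '' {b : Fin 2 → ℕ | b 0 + b 1 ≤ e}
      = ebn F '' {b : Fin 2 → ℕ | b 0 + b 1 ≤ e} :=
    Set.image_congr' (fun b => evA_mon F b)
  rw [himg]
  apply le_antisymm
  · rw [Submodule.span_le]
    rintro _ ⟨b, hb, rfl⟩
    have hrw : ebn F b = ebn F (fun i => ob N (b i)) := by
      funext P
      simp only [ebn]
      rw [pow_ob hN (P 0) (b 0), pow_ob hN (P 1) (b 1)]
    rw [hrw]
    refine Submodule.subset_span ⟨fun i => ob N (b i), ⟨⟨?_, ?_⟩, ?_⟩, rfl⟩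
    · exact ob_le_sub_one hN2 _
    · exact ob_le_sub_one hN2 _
    · exact le_trans (Nat.add_le_add (ob_le_self N (b 0)) (ob_le_self N (b 1))) hb
  · exact Submodule.span_mono (Set.image_mono (fun b hb => hb.2))




lemma N4 {q : ℕ} (hq : 2 ≤ q) : 4 ≤ q ^ 2 := by nlinarith

lemma cast_n1 {q : ℕ} (hq : 2 ≤ q) : ((q ^ 2 - 1 : ℕ) : ℤ) = (q : ℤ) ^ 2 - 1 := by
  have := N4 hq
  push_cast [Nat.cast_sub (by omega : 1 ≤ q ^ 2)]
  ring

lemma ob_dvd_sub' {q : ℕ} (hq : 2 ≤ q) (z : ℕ) :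
    ((q:ℤ)^2 - 1) ∣ (z : ℤ) - ob (q^2) z := by
  have h := ob_dvd_sub (by have := N4 hq; omega : 2 ≤ q^2) z
  have e : ((q^2 : ℕ) : ℤ) - 1 = (q:ℤ)^2 - 1 := by push_cast; ring
  rwa [e] at h

/-- 5a-side coordinate bound. -/
lemma coord_bound {q x y : ℕ} (hq : 2 ≤ q) (hx : x ≤ q^2 - 1)
    (hpos : 0 < x + q * y) (hdvd : (q^2 - 1) ∣ x + q * y) :
    q^2 - 1 ≤ ob (q^2) (q * x) + y := by
  have hN4 := N4 hq
  set n : ℤ := (q:ℤ)^2 - 1 with hn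
  have hq' : (2:ℤ) ≤ (q:ℤ) := by exact_mod_cast hq
  have hnpos : (0:ℤ) < n := by nlinarith
  have h1 : n ∣ ((x : ℤ) + q * y) := by
    have h := (Int.natCast_dvd_natCast.mpr hdvd)
    rwa [cast_n1 hq, Nat.cast_add, Nat.cast_mul] at h
  have h2 : n ∣ (q : ℤ) * x + y := by
    have h3 : n ∣ (q:ℤ) * ((x : ℤ) + q * y) - n * y := dvd_sub (h1.mul_left q) ⟨y, rfl⟩
    have e : (q:ℤ) * ((x : ℤ) + q * y) - n * y = (q:ℤ) * x + y := by rw [hn]; ring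
    rwa [e] at h3
  have h4 : n ∣ (ob (q^2) (q * x) : ℤ) + y := by
    have h5 := ob_dvd_sub' hq (q * x)
    have h6 : n ∣ ((q:ℤ) * x + y) - (((q * x : ℕ) : ℤ) - ob (q^2) (q * x)) := dvd_sub h2 h5
    have e : ((q:ℤ) * x + y) - (((q * x : ℕ) : ℤ) - ob (q^2) (q * x))
        = (ob (q^2) (q * x) : ℤ) + y := by push_cast; ring
    rwa [e] at h6
  have hpos2 : (0:ℤ) < (ob (q^2) (q * x) : ℤ) + y := by
    rcases Nat.eq_zero_or_pos (ob (q^2) (q * x) + y) with h0 | h0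
    · exfalso
      have hx0 : q * x = 0 := (ob_eq_zero_iff (q^2) _).mp (by omega)
      have hx0' : x = 0 := by
        rcases Nat.mul_eq_zero.mp hx0 with h | h
        · omega
        · exact h
      have hy0 : y = 0 := by omega
      rw [hx0', hy0, Nat.mul_zero] at hpos
      omega
    · exact_mod_cast h0
  have h7 := Int.le_of_dvd hpos2 h4
  have h8 : ((q^2 - 1 : ℕ) : ℤ) ≤ ((ob (q^2) (q * x) + y : ℕ) : ℤ) := by
    rw [cast_n1 hq]; push_cast; omega
  exact_mod_cast h8

/-- 5b-side: which exponents `x` contribute against the chosen dual monomial. -/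
lemma contrib_iff {q x b : ℕ} (hq : 2 ≤ q) (hx : x ≤ q^2 - 1) (hb : b ≤ q^2 - 1) :
    ((q^2 - 1) ∣ x + q * ((q^2 - 1) - ob (q^2) (q * b)) ∧
      0 < x + q * ((q^2 - 1) - ob (q^2) (q * b)))
      ↔ (x = b ∨ (b = 0 ∧ x = q^2 - 1)) := by
  have hN4 := N4 hq
  have hN2 : 2 ≤ q ^ 2 := by omega
  set o : ℕ := ob (q^2) (q * b) with ho
  have hole : o ≤ q^2 - 1 := ob_le_sub_one hN2 _
  set y : ℕ := (q^2 - 1) - o with hy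
  set n : ℤ := (q:ℤ)^2 - 1 with hn
  have hq' : (2:ℤ) ≤ (q:ℤ) := by exact_mod_cast hq
  have hnpos : (0:ℤ) < n := by nlinarith
  have hn3 : (3:ℤ) ≤ n := by nlinarith
  have hcast : ((q^2 - 1 : ℕ) : ℤ) = n := cast_n1 hq
  have hyz : (y : ℤ) = n - o := by
    rw [hy, Nat.cast_sub hole, hcast]
  have hob : n ∣ ((q * b : ℕ) : ℤ) - o := ob_dvd_sub' hq (q * b)
  have h2 : n ∣ (q:ℤ) * (n - (o:ℤ)) + b := by
    have h4 : (q:ℤ) * (n - o) + b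
        = n * ((q:ℤ) - b) + (q:ℤ) * (((q * b : ℕ) : ℤ) - o) := by
      push_cast; rw [hn]; ring
    rw [h4]
    exact dvd_add ⟨(q:ℤ) - b, rfl⟩ (hob.mul_left q)
  have equiv_dvd : (n ∣ (x:ℤ) + q * y) ↔ (n ∣ (x:ℤ) - b) := by
    have e : (x:ℤ) + q * y = ((x:ℤ) - b) + ((q:ℤ) * (n - o) + b) := by rw [hyz]; ring
    constructor
    · intro h
      have h5 := dvd_sub (e ▸ h) h2
      rwa [add_sub_cancel_right] at h5
    · intro h
      rw [e]
      exact dvd_add h h2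
  have hxle : (x:ℤ) ≤ n := by rw [← hcast]; exact_mod_cast hx
  have hble : (b:ℤ) ≤ n := by rw [← hcast]; exact_mod_cast hb
  constructor
  · rintro ⟨hdvd, hpos⟩
    have h1 : n ∣ (x : ℤ) - b := by
      apply equiv_dvd.mp
      have h := (Int.natCast_dvd_natCast.mpr hdvd)
      rwa [hcast, Nat.cast_add, Nat.cast_mul] at h
    rcases lt_trichotomy ((x:ℤ) - b) 0 with hd | hd | hd
    · -- x < b : then b - x = n, so x = 0, b = q²-1, excluded by positivity
      exfalso
      have h6 : n ∣ (b:ℤ) - x := by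
        rw [show (b:ℤ) - x = -((x:ℤ) - b) by ring, dvd_neg]
        exact h1
      have h7 := Int.le_of_dvd (by omega) h6
      have hxz : (x:ℤ) = 0 := by omega
      have hbz : (b:ℤ) = ((q^2 - 1 : ℕ) : ℤ) := by rw [hcast]; omega
      have hx0 : x = 0 := by exact_mod_cast hxz
      have hb0 : b = q^2 - 1 := by exact_mod_cast hbz
      have hoeq : o = q^2 - 1 := by
        rw [ho, hb0]
        exact ob_of_dvd hN2 (Nat.mul_pos (by omega) (by omega)) (dvd_mul_left _ _)
      have hy0 : y = 0 := by omega
      rw [hx0, hy0, Nat.mul_zero] at hpos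
      omega
    · left
      have : (x:ℤ) = b := by omega
      exact_mod_cast this
    · right
      have h6 := Int.le_of_dvd hd h1
      have hx0 : (x:ℤ) - b = n := by omega
      have hb0 : (b:ℤ) = 0 := by omega
      constructor
      · exact_mod_cast hb0
      · have : (x:ℤ) = ((q^2-1:ℕ):ℤ) := by rw [hcast]; omega
        exact_mod_cast this
  · rintro (rfl | ⟨hb0, hx0⟩)
    · constructor
      · have hd : n ∣ (x:ℤ) + q * y := equiv_dvd.mpr (by simp)
        have : ((q^2-1:ℕ):ℤ) ∣ ((x + q*y : ℕ) : ℤ) := by rw [hcast]; push_cast; exact hd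
        exact_mod_cast this
      · rcases Nat.eq_zero_or_pos x with rfl | hxpos
        · have ho0 : o = 0 := by rw [ho, Nat.mul_zero, ob_zero]
          have hy0 : y = q^2 - 1 := by omega
          have : 0 < q * y := Nat.mul_pos (by omega) (by omega)
          omega
        · omega
    · subst hb0 hx0
      have ho0 : o = 0 := by rw [ho, Nat.mul_zero, ob_zero]
      have hy0 : y = q^2 - 1 := by omega
      constructor
      · rw [hy0]
        exact ⟨1 + q, by ring⟩
      · omega



lemma frob_add {F : Type*} [Field F] [Fintype F] {q : ℕ} (hq : Fintype.card F = q ^ 2)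
    (hq2 : 2 ≤ q) (x y : F) : (x + y) ^ q = x ^ q + y ^ q := by
  obtain ⟨n, hp, hcard⟩ := FiniteField.card F (ringChar F)
  haveI := Fact.mk hp
  have hdvd : q ∣ (ringChar F) ^ (n : ℕ) := by
    rw [← hcard, hq]
    exact ⟨q, sq q⟩
  obtain ⟨m, hm, rfl⟩ := (Nat.dvd_prime_pow hp).mp hdvd
  exact add_pow_char_pow x y (ringChar F) m

/-- A single coordinate factor of the dual pairing, on the dual side (5b). -/
lemma coordS {F : Type*} [Field F] [Fintype F] {q x b : ℕ} (hq : Fintype.card F = q ^ 2)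
    (hq2 : 2 ≤ q) (hx : x ≤ q ^ 2 - 1) (hb : b ≤ q ^ 2 - 1) :
    (∑ t : F, t ^ (x + q * ((q ^ 2 - 1) - ob (q ^ 2) (q * b))))
      = if x = b ∨ (b = 0 ∧ x = q ^ 2 - 1) then (-1 : F) else 0 := by
  rw [sum_pow_eq hq]
  congr 1
  rw [eq_iff_iff, ← contrib_iff hq2 hx hb]
  constructor
  · rintro ⟨h1, h2⟩; exact ⟨h2, Nat.pos_of_ne_zero h1⟩
  · rintro ⟨h1, h2⟩; exact ⟨Nat.pos_iff_ne_zero.mp h2, h1⟩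

def Bset (q d : ℕ) : Set (Fin 2 → ℕ) :=
  {b : Fin 2 → ℕ | (b 0 ≤ q ^ 2 - 1 ∧ b 1 ≤ q ^ 2 - 1) ∧ b 0 + b 1 ≤ d}

def Dcond (q d₂ : ℕ) (b : Fin 2 → ℕ) : Prop :=
  (ob (q ^ 2) (q * b 0) : ℤ) + (ob (q ^ 2) (q * b 1) : ℤ)
    ≤ 2 * ((q : ℤ) ^ 2 - 1) - (d₂ : ℤ) - 1

def yfun (q : ℕ) (b : Fin 2 → ℕ) : Fin 2 → ℕ :=
  fun j => (q ^ 2 - 1) - ob (q ^ 2) (q * b j)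

lemma RM_eq_span' (F : Type*) [Field F] [Fintype F] {q : ℕ} (hq : Fintype.card F = q ^ 2)
    (hq2 : 2 ≤ q) (e : ℕ) : RM F e = Submodule.span F (ebn F '' Bset q e) :=
  RM_eq_span F hq (by have := N4 hq2; omega) e

/-- 5a: the pairing of a `D`-good monomial with any low-degree dual generator vanishes. -/
lemma pairing_zero_of_D {F : Type*} [Field F] [Fintype F] {q d₂ : ℕ}
    (hq : Fintype.card F = q ^ 2) (hq2 : 2 ≤ q) (b b' : Fin 2 → ℕ)
    (hb0 : b 0 ≤ q ^ 2 - 1) (hb1 : b 1 ≤ q ^ 2 - 1)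
    (hD : Dcond q d₂ b) (hb' : b' 0 + b' 1 ≤ d₂) :
    (∑ P : Fin 2 → F, ebn F b P * (ebn F b' P) ^ q) = 0 := by
  rw [pairing_eq, sum_pow_eq hq, sum_pow_eq hq]
  by_contra hcon
  have h0 : (b 0 + q * b' 0 ≠ 0 ∧ (q ^ 2 - 1) ∣ b 0 + q * b' 0) := by
    by_contra h; rw [if_neg h, zero_mul] at hcon; exact hcon rfl
  have h1 : (b 1 + q * b' 1 ≠ 0 ∧ (q ^ 2 - 1) ∣ b 1 + q * b' 1) := by
    by_contra h; rw [if_neg h, mul_zero] at hcon; exact hcon rfl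
  have c0 := coord_bound hq2 hb0 (Nat.pos_of_ne_zero h0.1) h0.2
  have c1 := coord_bound hq2 hb1 (Nat.pos_of_ne_zero h1.1) h1.2
  have c0' : ((q ^ 2 - 1 : ℕ) : ℤ) ≤ (ob (q ^ 2) (q * b 0) : ℤ) + (b' 0 : ℤ) := by
    exact_mod_cast c0
  have c1' : ((q ^ 2 - 1 : ℕ) : ℤ) ≤ (ob (q ^ 2) (q * b 1) : ℤ) + (b' 1 : ℤ) := by
    exact_mod_cast c1
  have hb'' : (b' 0 : ℤ) + (b' 1 : ℤ) ≤ (d₂ : ℤ) := by exact_mod_cast hb'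
  rw [cast_n1 hq2] at c0' c1'
  have hD' := hD
  rw [Dcond] at hD'
  omega

/-- 5a: membership of a `D`-good monomial in the Hermitian dual of `RM d₂`. -/
lemma ebn_mem_dual {F : Type*} [Field F] [Fintype F] {q d₂ : ℕ}
    (hq : Fintype.card F = q ^ 2) (hq2 : 2 ≤ q) (b : Fin 2 → ℕ)
    (hb0 : b 0 ≤ q ^ 2 - 1) (hb1 : b 1 ≤ q ^ 2 - 1)
    (hD : Dcond q d₂ b) :
    ebn F b ∈ hermDualA q (RM F d₂) := by
  show ∀ w ∈ RM F d₂, ∑ P : Fin 2 → F, ebn F b P * (w P) ^ q = 0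
  intro w hw
  rw [RM_eq_span' F hq hq2 d₂] at hw
  induction hw using Submodule.span_induction with
  | mem x hx =>
    obtain ⟨b', ⟨⟨hb'0, hb'1⟩, hb'sum⟩, rfl⟩ := hx
    exact pairing_zero_of_D hq hq2 b b' hb0 hb1 hD hb'sum
  | zero =>
    have hq0 : q ≠ 0 := by omega
    simp [zero_pow hq0]
  | add x y hx hy ihx ihy =>
    have h : ∀ P : Fin 2 → F, ebn F b P * ((x + y) P) ^ q
        = ebn F b P * (x P) ^ q + ebn F b P * (y P) ^ q := by
      intro P
      rw [Pi.add_apply, frob_add hq hq2, mul_add]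
    simp only [h, Finset.sum_add_distrib, ihx, ihy, add_zero]
  | smul a x hx ih =>
    have h : ∀ P : Fin 2 → F, ebn F b P * ((a • x) P) ^ q
        = a ^ q * (ebn F b P * (x P) ^ q) := by
      intro P
      rw [Pi.smul_apply, smul_eq_mul, mul_pow]
      ring
    simp only [h, ← Finset.mul_sum, ih, mul_zero]

/-- The linear functional `w ↦ ∑ w P * u P`. -/
noncomputable def pairL (F : Type*) [Field F] [Fintype F] (u : (Fin 2 → F) → F) :
    ((Fin 2 → F) → F) →ₗ[F] F where
  toFun w := ∑ P : Fin 2 → F, w P * u P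
  map_add' w w' := by
    simp [Pi.add_apply, add_mul, Finset.sum_add_distrib]
  map_smul' a w := by
    simp [Pi.smul_apply, smul_eq_mul, mul_assoc, ← Finset.mul_sum]

end Stmt10Aux

open Stmt10Aux in
/-- the evaluations of the monomials in `U_{d₁,d₂}` form a basis of
`RM_{d₁}(q²,2) ∩ RM_{d₂}^{⊥h}(q²,2)`. -/
theorem stmt10 {F : Type*} [Field F] [Fintype F] (q d₁ d₂ : ℕ)
    (hq : Fintype.card F = q ^ 2)
    (h1 : d₁ ≤ 2 * (q ^ 2 - 1)) (h2 : d₂ ≤ 2 * (q ^ 2 - 1)) :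
    LinearIndependent F
      (fun M : Uset F q d₁ d₂ => evA F (M : MvPolynomial (Fin 2) F)) ∧
    Submodule.span F (evA F '' Uset F q d₁ d₂) = RM F d₁ ⊓ hermDualA q (RM F d₂) := by
  classical
  have hq2 : 2 ≤ q := by
    have hcard : 1 < Fintype.card F := Fintype.one_lt_card
    by_contra hcon
    push_neg at hcon
    interval_cases q <;> omega
  have hN4 : 4 ≤ q ^ 2 := N4 hq2
  have hN2 : 2 ≤ q ^ 2 := by omega
  have hUexp : ∀ M : Uset F q d₁ d₂, ∃ a : Fin 2 → ℕ,
      a 0 ≤ q ^ 2 - 1 ∧ a 1 ≤ q ^ 2 - 1 ∧ a 0 + a 1 ≤ d₁ ∧ Dcond q d₂ a ∧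
      (M : MvPolynomial (Fin 2) F) = mon F a := by
    rintro ⟨M, a₁, a₂, ha₁, ha₂, hsum, hD, rfl⟩
    refine ⟨![a₁, a₂], by simpa using ha₁, by simpa using ha₂, by simpa using hsum, ?_, rfl⟩
    rw [Dcond]
    simpa using hD
  constructor
  · -- linear independence
    have hindep := indep_aux F hq
    set φ : Uset F q d₁ d₂ → (Fin 2 → Fin (q ^ 2)) := fun M =>
      fun i => ⟨(hUexp M).choose i,
        by
          have h := (hUexp M).choose_spec
          fin_cases i
          · exact lt_of_le_of_lt h.1 (by omega)
          · exact lt_of_le_of_lt h.2.1 (by omega)⟩ with hφ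
    have hcomm : ∀ M : Uset F q d₁ d₂,
        evA F (M : MvPolynomial (Fin 2) F) = evA F (mon F (fun i => ((φ M i : ℕ)))) := by
      intro M
      have h := (hUexp M).choose_spec
      rw [h.2.2.2.2]
    have hφinj : Function.Injective φ := by
      intro M M' h
      have hM := (hUexp M).choose_spec
      have hM' := (hUexp M').choose_spec
      have he : (hUexp M).choose = (hUexp M').choose := by
        funext i
        have h2 := congrFun h i
        simpa [hφ, Fin.ext_iff] using h2
      apply Subtype.ext
      rw [hM.2.2.2.2, hM'.2.2.2.2, he]
    have heq : (fun M : Uset F q d₁ d₂ => evA F (M : MvPolynomial (Fin 2) F))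
        = (fun b : Fin 2 → Fin (q ^ 2) => evA F (mon F (fun i => (b i : ℕ)))) ∘ φ := by
      funext M
      exact hcomm M
    rw [heq]
    exact hindep.comp φ hφinj
  · -- span characterization
    apply le_antisymm
    · rw [Submodule.span_le]
      rintro _ ⟨M, hM, rfl⟩
      obtain ⟨a, ha0, ha1, hasum, haD, haeq⟩ := hUexp ⟨M, hM⟩
      simp only at haeq
      rw [haeq, SetLike.mem_coe, Submodule.mem_inf]
      constructor
      · rw [RM_eq_span' F hq hq2 d₁, evA_mon]
        exact Submodule.subset_span ⟨a, ⟨⟨ha0, ha1⟩, hasum⟩, rfl⟩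
      · rw [evA_mon]
        exact ebn_mem_dual hq hq2 a ha0 ha1 haD
    · rintro v hv
      rw [Submodule.mem_inf] at hv
      obtain ⟨hv1, hv2'⟩ := hv
      have hv2 : ∀ w ∈ RM F d₂, ∑ P : Fin 2 → F, v P * (w P) ^ q = 0 := hv2'
      rw [RM_eq_span' F hq hq2 d₁, Set.image_eq_range] at hv1
      obtain ⟨c, hc⟩ := Finsupp.mem_span_range_iff_exists_finsupp.mp hv1
      have main : ∀ k : ℕ, ∀ i : ↥(Bset q d₁), ¬ Dcond q d₂ i.1 →
          2 * (q ^ 2 - 1) - ((i : Fin 2 → ℕ) 0 + (i : Fin 2 → ℕ) 1) = k → c i = 0 := by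
        intro k
        induction k using Nat.strong_induction_on with
        | _ k IH =>
        intro i hDi hk
        obtain ⟨⟨hi0, hi1⟩, hisum⟩ := i.2
        have hob0 : ob (q ^ 2) (q * i.1 0) ≤ q ^ 2 - 1 := ob_le_sub_one hN2 _
        have hob1 : ob (q ^ 2) (q * i.1 1) ≤ q ^ 2 - 1 := ob_le_sub_one hN2 _
        have hysum : yfun q i.1 0 + yfun q i.1 1 ≤ d₂ := by
          rw [Dcond] at hDi
          push_neg at hDi
          have e0 : ((yfun q i.1 0 : ℕ) : ℤ)
              = ((q ^ 2 - 1 : ℕ) : ℤ) - (ob (q ^ 2) (q * i.1 0) : ℤ) := by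
            simp only [yfun]
            push_cast [Nat.cast_sub hob0]
            ring
          have e1 : ((yfun q i.1 1 : ℕ) : ℤ)
              = ((q ^ 2 - 1 : ℕ) : ℤ) - (ob (q ^ 2) (q * i.1 1) : ℤ) := by
            simp only [yfun]
            push_cast [Nat.cast_sub hob1]
            ring
          have hcast := cast_n1 hq2
          have hfin : ((yfun q i.1 0 + yfun q i.1 1 : ℕ) : ℤ) ≤ (d₂ : ℤ) := by
            push_cast
            omega
          exact_mod_cast hfin
        have hwmem : ebn F (yfun q i.1) ∈ RM F d₂ := by
          rw [RM_eq_span' F hq hq2 d₂]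
          exact Submodule.subset_span
            ⟨yfun q i.1, ⟨⟨Nat.sub_le _ _, Nat.sub_le _ _⟩, hysum⟩, rfl⟩
        have hzero : (∑ P : Fin 2 → F, v P * (ebn F (yfun q i.1) P) ^ q) = 0 :=
          hv2 (ebn F (yfun q i.1)) hwmem
        have hLv : (pairL F (fun P => (ebn F (yfun q i.1) P) ^ q)) v
            = c.sum fun j a => a * ((∑ t : F, t ^ ((j : Fin 2 → ℕ) 0 + q * yfun q i.1 0))
                * (∑ t : F, t ^ ((j : Fin 2 → ℕ) 1 + q * yfun q i.1 1))) := by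
          rw [← hc, map_finsuppSum]
          apply Finsupp.sum_congr
          intro j _
          rw [LinearMap.map_smul, smul_eq_mul]
          congr 1
          show (∑ P : Fin 2 → F, ebn F j.1 P * (ebn F (yfun q i.1) P) ^ q) = _
          rw [pairing_eq]
        have hLv0 : (pairL F (fun P => (ebn F (yfun q i.1) P) ^ q)) v = 0 := hzero
        rw [hLv0] at hLv
        have hfac : ∀ (j : ↥(Bset q d₁)) (l : Fin 2), j.1 l ≤ q ^ 2 - 1 →
            (∑ t : F, t ^ ((j : Fin 2 → ℕ) l + q * yfun q i.1 l))
              = if (j : Fin 2 → ℕ) l = i.1 l ∨ (i.1 l = 0 ∧ (j : Fin 2 → ℕ) l = q ^ 2 - 1)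
                then (-1 : F) else 0 := by
          intro j l hjl
          have hbl : i.1 l ≤ q ^ 2 - 1 := by fin_cases l <;> assumption
          exact coordS hq hq2 hjl hbl
        have hsingle : (c.sum fun j a =>
              a * ((∑ t : F, t ^ ((j : Fin 2 → ℕ) 0 + q * yfun q i.1 0))
                * (∑ t : F, t ^ ((j : Fin 2 → ℕ) 1 + q * yfun q i.1 1)))) = c i * 1 := by
          rw [Finsupp.sum, Finset.sum_eq_single i]
          · congr 1
            rw [hfac i 0 hi0, hfac i 1 hi1, if_pos (Or.inl rfl), if_pos (Or.inl rfl)]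
            ring
          · intro j hjmem hjne
            have hj0 : j.1 0 ≤ q ^ 2 - 1 := j.2.1.1
            have hj1 : j.1 1 ≤ q ^ 2 - 1 := j.2.1.2
            have hjsum : j.1 0 + j.1 1 ≤ d₁ := j.2.2
            rw [hfac j 0 hj0, hfac j 1 hj1]
            by_cases hc0 : (j : Fin 2 → ℕ) 0 = i.1 0 ∨ (i.1 0 = 0 ∧ (j : Fin 2 → ℕ) 0 = q ^ 2 - 1)
            · by_cases hc1 : (j : Fin 2 → ℕ) 1 = i.1 1 ∨ (i.1 1 = 0 ∧ (j : Fin 2 → ℕ) 1 = q ^ 2 - 1)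
              · have hjneb : (j : Fin 2 → ℕ) ≠ i.1 := by
                  intro hcontra
                  exact hjne (Subtype.ext hcontra)
                have hnotboth : ¬ ((j : Fin 2 → ℕ) 0 = i.1 0 ∧ (j : Fin 2 → ℕ) 1 = i.1 1) := by
                  rintro ⟨f0, f1⟩
                  apply hjneb
                  funext l
                  fin_cases l
                  · exact f0
                  · exact f1
                have hjD : ¬ Dcond q d₂ j.1 := by
                  rw [Dcond]
                  push_neg
                  rw [Dcond] at hDi
                  push_neg at hDi
                  have m0 : (ob (q ^ 2) (q * i.1 0) : ℤ)
                      ≤ (ob (q ^ 2) (q * (j : Fin 2 → ℕ) 0) : ℤ) := by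
                    rcases hc0 with h | ⟨hx0, hx1⟩
                    · rw [h]
                    · rw [hx0, Nat.mul_zero, ob_zero]
                      exact_mod_cast Nat.zero_le _
                  have m1 : (ob (q ^ 2) (q * i.1 1) : ℤ)
                      ≤ (ob (q ^ 2) (q * (j : Fin 2 → ℕ) 1) : ℤ) := by
                    rcases hc1 with h | ⟨hx0, hx1⟩
                    · rw [h]
                    · rw [hx0, Nat.mul_zero, ob_zero]
                      exact_mod_cast Nat.zero_le _
                  omega
                have hjsumgt : i.1 0 + i.1 1 < (j : Fin 2 → ℕ) 0 + (j : Fin 2 → ℕ) 1 := by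
                  rcases hc0 with f0 | ⟨g0, g0'⟩
                  · rcases hc1 with f1 | ⟨g1, g1'⟩
                    · exact absurd ⟨f0, f1⟩ hnotboth
                    · omega
                  · rcases hc1 with f1 | ⟨g1, g1'⟩
                    · omega
                    · omega
                have hmeas : 2 * (q ^ 2 - 1) - ((j : Fin 2 → ℕ) 0 + (j : Fin 2 → ℕ) 1) < k := by
                  omega
                rw [IH _ hmeas j hjD rfl, zero_mul]
              · rw [if_neg hc1, mul_zero, mul_zero]
            · rw [if_neg hc0, zero_mul, mul_zero]
          · intro hnot
            rw [Finsupp.notMem_support_iff.mp hnot, zero_mul]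
        rw [hsingle] at hLv
        have hfin := hLv.symm
        rwa [mul_one] at hfin
      rw [← hc]
      apply Submodule.sum_mem
      intro i _
      by_cases hDi : Dcond q d₂ i.1
      · apply Submodule.smul_mem
        apply Submodule.subset_span
        refine ⟨mon F i.1, ⟨(i : Fin 2 → ℕ) 0, (i : Fin 2 → ℕ) 1,
          i.2.1.1, i.2.1.2, i.2.2, hDi, rfl⟩, ?_⟩
        exact evA_mon F i.1
      · have h0 := main _ i hDi rfl
        simp only [h0, zero_smul]
        exact Submodule.zero_mem _
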